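/- Define B_5 = ⋃_{j=0}^{4} T^j([0^5]) and for m ≥ 6, B_m = L_m ∖ ⋃_{i=5}^{m-1} L_i, where L_i = ⋃_{j=0}^{i-1} T^j([0^i]) and T is the odometer on X = {0,1}^ℕ. Then for m ≥ 6, B_m is either the set T^{m-1}([0^m]) or the empty set; consequently ν(B_5) = 5/32 and ν(B_m) ∈ {0, 2^{-m}} for m ≥ 6, where ν is the Bernoulli(1/2,1/2) measure. -/

import Mathlib

open MeasureTheory Filter Topology
open scoped ENNReal

/-- The odometer map on `X = {0,1}^ℕ` (adding one with carry in binary). -/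
def Tod (x : ℕ → Bool) : ℕ → Bool := fun k =>
  if ∀ i < k, x i = true then !(x k) else x k

/-- The inverse of the odometer map (subtracting one with borrow). -/
def TodInv (x : ℕ → Bool) : ℕ → Bool := fun k =>
  if ∀ i < k, x i = false then !(x k) else x k

/-- The number determined by the first `k` binary digits of `x`. -/
def DN (k : ℕ) (x : ℕ → Bool) : ℕ := ∑ i ∈ Finset.range k, 2 ^ i * (x i).toNat

/-- The cylinder `[0^i]` of sequences starting with `i` zeros. -/
def cyl0 (i : ℕ) : Set (ℕ → Bool) := {x | ∀ j < i, x j = false}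

/-- `A = ⋃_{i=5}^∞ ⋃_{j=0}^{i-1} T^j([0^i])`. -/
def Aset : Set (ℕ → Bool) := ⋃ (i : ℕ) (_ : 5 ≤ i) (j : ℕ) (_ : j < i), Tod^[j] '' cyl0 i

/-- `A_k = ⋃_{i=5}^{k} ⋃_{j=0}^{i-1} T^j([0^i])`. -/
def Ak (k : ℕ) : Set (ℕ → Bool) :=
  ⋃ (i : ℕ) (_ : 5 ≤ i) (_ : i ≤ k) (j : ℕ) (_ : j < i), Tod^[j] '' cyl0 i

/-- `E_k = ⋃_{i=k+1}^∞ ⋃_{j=0}^{i-1} T^j([0^i])`. -/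
def Ek (k : ℕ) : Set (ℕ → Bool) :=
  ⋃ (i : ℕ) (_ : k + 1 ≤ i) (j : ℕ) (_ : j < i), Tod^[j] '' cyl0 i

/-- `L_i = ⋃_{j=0}^{i-1} T^j([0^i])`. -/
def Lset (i : ℕ) : Set (ℕ → Bool) := ⋃ (j : ℕ) (_ : j < i), Tod^[j] '' cyl0 i

/-- `B_5 = ⋃_{j=0}^{4} T^j([0^5])` and `B_m = L_m ∖ ⋃_{i=5}^{m-1} L_i` for `m ≥ 6`. -/
def Bset (m : ℕ) : Set (ℕ → Bool) :=
  if m = 5 then Lset 5 else Lset m \ ⋃ (i : ℕ) (_ : 5 ≤ i) (_ : i ≤ m - 1), Lset i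

/-! ### Auxiliary lemmas -/

/-- The cylinder of sequences whose first `i` binary digits encode `j`. -/
def Cs (i j : ℕ) : Set (ℕ → Bool) := {x | ∀ k < i, x k = Nat.testBit j k}

lemma bits_inj {i j j' : ℕ} (hj : j < 2 ^ i) (hj' : j' < 2 ^ i)
    (h : ∀ k < i, Nat.testBit j k = Nat.testBit j' k) : j = j' := by
  apply Nat.eq_of_testBit_eq
  intro k
  by_cases hk : k < i
  · exact h k hk
  · have hik : 2 ^ i ≤ 2 ^ k := Nat.pow_le_pow_right (by norm_num) (le_of_not_gt hk)
    rw [Nat.testBit_lt_two_pow (lt_of_lt_of_le hj hik),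
      Nat.testBit_lt_two_pow (lt_of_lt_of_le hj' hik)]

lemma testBit_add_one (j k : ℕ) :
    Nat.testBit (j + 1) k =
      if ∀ i < k, Nat.testBit j i = true then !(Nat.testBit j k) else Nat.testBit j k := by
  have hpos : 0 < 2 ^ k := Nat.two_pow_pos k
  by_cases h : ∀ i < k, Nat.testBit j i = true
  · rw [if_pos h]
    have hmod : j % 2 ^ k = 2 ^ k - 1 := by
      apply Nat.eq_of_testBit_eq
      intro b
      rw [Nat.testBit_mod_two_pow, Nat.testBit_two_pow_sub_one]
      by_cases hb : b < k
      · simp [hb, h b hb]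
      · simp [hb]
    have hdm := Nat.div_add_mod j (2 ^ k)
    rw [hmod] at hdm
    have hdiv : (j + 1) / 2 ^ k = j / 2 ^ k + 1 := by
      have hj1 : j + 1 = 2 ^ k * (j / 2 ^ k + 1) := by
        rw [Nat.mul_add, Nat.mul_one]
        calc j + 1 = 2 ^ k * (j / 2 ^ k) + j % 2 ^ k + 1 := by rw [Nat.div_add_mod]
          _ = 2 ^ k * (j / 2 ^ k) + 2 ^ k := by
              rw [hmod, Nat.add_assoc, Nat.sub_add_cancel hpos]
      rw [hj1, Nat.mul_div_cancel_left _ hpos]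
    rw [Nat.testBit_eq_decide_div_mod_eq, Nat.testBit_eq_decide_div_mod_eq, hdiv]
    rcases Nat.mod_two_eq_zero_or_one (j / 2 ^ k) with h2 | h2 <;>
      simp [Nat.add_mod, h2]
  · rw [if_neg h]
    push_neg at h
    obtain ⟨p, hp, hbp⟩ := h
    have hbp' : Nat.testBit j p = false := by
      cases hb : Nat.testBit j p
      · rfl
      · exact absurd hb hbp
    have hmod : j % 2 ^ k ≠ 2 ^ k - 1 := by
      intro hc
      have h1 : Nat.testBit (j % 2 ^ k) p = (decide (p < k) && Nat.testBit j p) :=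
        Nat.testBit_mod_two_pow j k p
      rw [hc, Nat.testBit_two_pow_sub_one] at h1
      simp [hp, hbp'] at h1
    have hr : j % 2 ^ k < 2 ^ k := Nat.mod_lt _ hpos
    have hlt : j % 2 ^ k + 1 < 2 ^ k :=
      Nat.add_lt_of_lt_sub (lt_of_le_of_ne (Nat.le_sub_one_of_lt hr) hmod)
    have hdiv : (j + 1) / 2 ^ k = j / 2 ^ k := by
      have hj1 : 2 ^ k * (j / 2 ^ k) + (j % 2 ^ k + 1) = j + 1 := by
        rw [← Nat.add_assoc, Nat.div_add_mod]
      rw [← hj1, Nat.mul_add_div hpos, Nat.div_eq_of_lt hlt, Nat.add_zero]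
    rw [Nat.testBit_eq_decide_div_mod_eq, Nat.testBit_eq_decide_div_mod_eq, hdiv]

lemma tod_iter {i : ℕ} (j : ℕ) (hj : j < 2 ^ i) {y : ℕ → Bool} (hy : ∀ k < i, y k = false) :
    Tod^[j] y = fun k => if k < i then Nat.testBit j k else y k := by
  induction j with
  | zero =>
    funext k
    simp only [Function.iterate_zero, id_eq, Nat.zero_testBit]
    by_cases hk : k < i
    · rw [if_pos hk, hy k hk]
    · rw [if_neg hk]
  | succ j ih =>
    have hj' : j < 2 ^ i := by omega
    rw [Function.iterate_succ_apply', ih hj']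
    have hne : ∃ p < i, Nat.testBit j p = false := by
      by_contra hc
      push_neg at hc
      have hall : ∀ p < i, Nat.testBit j p = true := fun p hp => by
        cases hb : Nat.testBit j p
        · exact absurd hb (hc p hp)
        · rfl
      have hsub : 2 ^ i - 1 < 2 ^ i := by
        have := Nat.two_pow_pos i
        omega
      have : j = 2 ^ i - 1 := bits_inj hj' hsub
        (fun k hk => by rw [hall k hk, Nat.testBit_two_pow_sub_one]; simp [hk])
      omega
    obtain ⟨p, hp, hbp⟩ := hne
    funext k
    show (if ∀ i' < k, (if i' < i then Nat.testBit j i' else y i') = true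
        then !(if k < i then Nat.testBit j k else y k)
        else (if k < i then Nat.testBit j k else y k)) =
      if k < i then Nat.testBit (j + 1) k else y k
    by_cases hk : k < i
    · have hcond : (∀ i' < k, (if i' < i then Nat.testBit j i' else y i') = true) ↔
          (∀ i' < k, Nat.testBit j i' = true) :=
        forall₂_congr fun i' hi' => by rw [if_pos (hi'.trans hk)]
      rw [if_pos hk, if_pos hk, testBit_add_one j k]
      by_cases hc : ∀ i' < k, Nat.testBit j i' = true
      · rw [if_pos (hcond.mpr hc), if_pos hc]
      · rw [if_neg (fun h => hc (hcond.mp h)), if_neg hc]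
    · have hpk : p < k := lt_of_lt_of_le hp (le_of_not_gt hk)
      rw [if_neg hk, if_neg hk, if_neg]
      intro h
      have h2 := h p hpk
      rw [if_pos hp, hbp] at h2
      exact Bool.false_ne_true h2

lemma image_cyl (i j : ℕ) (hj : j < 2 ^ i) : Tod^[j] '' cyl0 i = Cs i j := by
  ext x
  constructor
  · rintro ⟨y, hy, rfl⟩
    intro k hk
    rw [tod_iter j hj hy]
    exact if_pos hk
  · intro hx
    refine ⟨fun k => if k < i then false else x k, fun k hk => if_pos hk, ?_⟩
    rw [tod_iter j hj (fun k hk => if_pos hk)]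
    funext k
    by_cases hk : k < i
    · rw [if_pos hk, hx k hk]
    · rw [if_neg hk, if_neg hk]

lemma Lset_eq (i : ℕ) : Lset i = ⋃ (j : ℕ) (_ : j < i), Cs i j := by
  unfold Lset
  refine Set.iUnion_congr fun j => Set.iUnion_congr fun hj => ?_
  exact image_cyl i j (hj.trans (Nat.lt_two_pow_self (n := i)))

lemma Cs_meas (i j : ℕ) : MeasurableSet (Cs i j) := by
  have hrw : Cs i j = ⋂ (k : ℕ) (_ : k < i), (fun x : ℕ → Bool => x k) ⁻¹' {Nat.testBit j k} := by
    ext x; simp [Cs]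
  rw [hrw]
  exact MeasurableSet.iInter fun k => MeasurableSet.iInter fun _ =>
    measurable_pi_apply k (measurableSet_singleton _)

lemma Cs_subset {i m j : ℕ} (him : i ≤ m) : Cs m j ⊆ Cs i (j % 2 ^ i) := by
  intro x hx k hk
  rw [hx k (lt_of_lt_of_le hk him), Nat.testBit_mod_two_pow]
  simp [hk]

lemma Cs_mem_lset {i j : ℕ} (hj : j < i) : Cs i j ⊆ Lset i := by
  rw [Lset_eq]
  intro x hx
  exact Set.mem_iUnion₂.mpr ⟨j, hj, hx⟩

/-- The main combinatorial dichotomy. -/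
lemma Bset_dichotomy (m : ℕ) (hm : 6 ≤ m) : Bset m = Cs m (m - 1) ∨ Bset m = ∅ := by
  have hm5 : m ≠ 5 := by omega
  have hU : Bset m = Lset m \ ⋃ (i : ℕ) (_ : 5 ≤ i) (_ : i ≤ m - 1), Lset i := by
    unfold Bset; rw [if_neg hm5]
  set U : Set (ℕ → Bool) := ⋃ (i : ℕ) (_ : 5 ≤ i) (_ : i ≤ m - 1), Lset i with hUdef
  have hsubU : ∀ i, 5 ≤ i → i ≤ m - 1 → Lset i ⊆ U := by
    intro i h5 hi x hx
    exact Set.mem_iUnion.mpr ⟨i, Set.mem_iUnion.mpr ⟨h5, Set.mem_iUnion.mpr ⟨hi, hx⟩⟩⟩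
  by_cases hP : ∃ i, 5 ≤ i ∧ i ≤ m - 1 ∧ (m - 1) % 2 ^ i < i
  · right
    obtain ⟨i, h5, him, hmod⟩ := hP
    rw [hU, Set.diff_eq_empty]
    rw [Lset_eq]
    refine Set.iUnion₂_subset fun j hj => ?_
    by_cases hjm : j < m - 1
    · refine Set.Subset.trans ?_ ((Cs_mem_lset hjm).trans (hsubU (m - 1) (by omega) le_rfl))
      intro x hx k hk
      exact hx k (by omega)
    · have hjm1 : j = m - 1 := by omega
      subst hjm1
      exact (Cs_subset (show i ≤ m by omega)).trans
        ((Cs_mem_lset hmod).trans (hsubU i h5 him))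
  · left
    push_neg at hP
    rw [hU]
    apply Set.Subset.antisymm
    · rintro x ⟨hxL, hxU⟩
      rw [Lset_eq] at hxL
      obtain ⟨j, hj, hxj⟩ := Set.mem_iUnion₂.mp hxL
      by_cases hjm : j < m - 1
      · exact absurd (hsubU (m - 1) (by omega) le_rfl
          ((Cs_mem_lset hjm) (fun k hk => hxj k (by omega)))) hxU
      · have hje : j = m - 1 := by omega
        subst hje
        exact hxj
    · intro x hx
      constructor
      · rw [Lset_eq]
        exact Set.mem_iUnion₂.mpr ⟨m - 1, by omega, hx⟩
      · intro hxU
        obtain ⟨i, hi⟩ := Set.mem_iUnion.mp hxU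
        obtain ⟨h5, hi2⟩ := Set.mem_iUnion.mp hi
        obtain ⟨him, hxL⟩ := Set.mem_iUnion.mp hi2
        rw [Lset_eq] at hxL
        obtain ⟨j, hji, hxj⟩ := Set.mem_iUnion₂.mp hxL
        have hkeq : ∀ k < i, Nat.testBit ((m - 1) % 2 ^ i) k = Nat.testBit j k := by
          intro k hk
          rw [Nat.testBit_mod_two_pow]
          simp only [hk, decide_true, Bool.true_and]
          rw [← hx k (by omega), hxj k hk]
        have hji2 : j < 2 ^ i := hji.trans (Nat.lt_two_pow_self (n := i))
        have heq := bits_inj (Nat.mod_lt _ (Nat.two_pow_pos i)) hji2 hkeq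
        have hge := hP i h5 him
        omega

/-- for `m ≥ 6`, `B_m` is either `T^{m-1}([0^m])` or empty; consequently
`ν(B_5) = 5/32` and `ν(B_m) ∈ {0, 2^{-m}}` for `m ≥ 6`. -/
theorem stmt4 (ν : Measure (ℕ → Bool))
    (hν : ∀ (n : ℕ) (a : ℕ → Bool), ν {x | ∀ i < n, x i = a i} = (2 : ℝ≥0∞)⁻¹ ^ n) :
    (∀ m, 6 ≤ m → Bset m = Tod^[m - 1] '' cyl0 m ∨ Bset m = ∅) ∧
    ν (Bset 5) = 5 / 32 ∧
    ∀ m, 6 ≤ m → ν (Bset m) = 0 ∨ ν (Bset m) = (2 : ℝ≥0∞)⁻¹ ^ m := by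
  have hCsν : ∀ i j, ν (Cs i j) = (2 : ℝ≥0∞)⁻¹ ^ i := fun i j =>
    hν i (fun k => Nat.testBit j k)
  refine ⟨fun m hm => ?_, ?_, fun m hm => ?_⟩
  · rcases Bset_dichotomy m hm with h | h
    · left
      rw [h, image_cyl m (m - 1) (by have := Nat.lt_two_pow_self (n := m); omega)]
    · right; exact h
  · have hB5 : Bset 5 = Lset 5 := if_pos rfl
    have hL5 : Lset 5 = ⋃ j ∈ Finset.range 5, Cs 5 j := by
      rw [Lset_eq]; ext x; simp [Finset.mem_range]
    rw [hB5, hL5, measure_biUnion_finset ?hd (fun j _ => Cs_meas 5 j)]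
    · rw [Finset.sum_congr rfl (fun j _ => hCsν 5 j), Finset.sum_const, Finset.card_range,
        nsmul_eq_mul]
      rw [show ((2 : ℝ≥0∞)⁻¹ ^ 5) = (32 : ℝ≥0∞)⁻¹ by rw [← ENNReal.inv_pow]; norm_num]
      rw [div_eq_mul_inv]
      norm_num
    case hd =>
      intro j hj j' hj' hne
      simp only [Finset.coe_range, Set.mem_Iio] at hj hj'
      refine Set.disjoint_left.mpr fun x hxj hxj' => hne ?_
      refine bits_inj (i := 5) (hj.trans (by norm_num)) (hj'.trans (by norm_num))
        fun k hk => ?_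
      rw [← hxj k hk, hxj' k hk]
  · rcases Bset_dichotomy m hm with h | h
    · right; rw [h]; exact hCsν m (m - 1)
    · left; rw [h]; exact measure_empty
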